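/- Let d₁,d₂,d₃ > 0, I₁ = d₂+d₃, I₂ = d₁+d₃, I₃ = d₁+d₂, and α₁,α₂,α₃ ∈ ℝ. Fix β ∈ (0, 1/2) and Δt > 0 with Δt(|α₁|/I₁ + |α₂|/I₂ + |α₃|/I₃) ≤ 2√((β−β²)/3) − β. If e₁²+e₂²+e₃² < β and e₀ = √(1−e₁²−e₂²−e₃²), then the iterate defined by e₁* = (Δt·α₁ − 2(d₂−d₃)e₂e₃)/(2(d₂+d₃)e₀), e₂* = (Δt·α₂ − 2(d₃−d₁)e₁e₃)/(2(d₁+d₃)e₀), e₃* = (Δt·α₃ − 2(d₁−d₂)e₁e₂)/(2(d₁+d₂)e₀) satisfies (e₁*)²+(e₂*)²+(e₃*)² < β. -/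

import Mathlib

lemma aux_bound (I e0 Δt α dm p e' : ℝ) (hI : 0 < I) (he0 : 0 < e0) (hΔt : 0 < Δt)
    (hdm : |dm| ≤ I) (h : e' = (Δt * α - 2*dm*p) / (2*I*e0)) :
    e'^2 ≤ (Δt * |α| / (2*I*e0) + |p| / e0)^2 := by
  have hden : (0:ℝ) < 2*I*e0 := by positivity
  have hnum : |Δt * α - 2*dm*p| ≤ Δt*|α| + 2*I*|p| := by
    calc |Δt * α - 2*dm*p| ≤ |Δt * α| + |2*dm*p| := abs_sub _ _
      _ = Δt*|α| + 2 * |dm| * |p| := by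
          rw [abs_mul, abs_of_pos hΔt, abs_mul, abs_mul]; norm_num
      _ ≤ Δt*|α| + 2*I*|p| := by nlinarith [abs_nonneg p]
  have habs : |e'| ≤ (Δt*|α| + 2*I*|p|)/(2*I*e0) := by
    rw [h, abs_div, abs_of_pos hden]
    gcongr
  have heq : (Δt*|α| + 2*I*|p|)/(2*I*e0) = Δt * |α| / (2*I*e0) + |p| / e0 := by
    field_simp
  calc e'^2 = |e'|^2 := (sq_abs e').symm
    _ ≤ ((Δt*|α| + 2*I*|p|)/(2*I*e0))^2 := by
        exact pow_le_pow_left₀ (abs_nonneg _) habs 2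
    _ = (Δt * |α| / (2*I*e0) + |p| / e0)^2 := by rw [heq]

lemma mul_abs_le (x y : ℝ) : |x*y| ≤ (x^2+y^2)/2 := by
  rw [abs_mul]
  nlinarith [sq_nonneg (|x| - |y|), sq_abs x, sq_abs y]

lemma pairs_bound (e1 e2 e3 : ℝ) :
    (e2*e3)^2 + (e1*e3)^2 + (e1*e2)^2 ≤ (e1^2 + e2^2 + e3^2)^2/3 := by
  nlinarith [sq_nonneg (e1^2 - e2^2), sq_nonneg (e1^2 - e3^2), sq_nonneg (e2^2 - e3^2)]

lemma sum_sq_bound (A1 A2 A3 B1 B2 B3 b : ℝ) (hA1 : 0 ≤ A1) (hA2 : 0 ≤ A2)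
    (hA3 : 0 ≤ A3) (hB1 : B1 ≤ b) (hB2 : B2 ≤ b) (hB3 : B3 ≤ b)
    (hBsq : B1^2 + B2^2 + B3^2 ≤ b^2) :
    (A1 + B1)^2 + (A2 + B2)^2 + (A3 + B3)^2 ≤ (A1 + A2 + A3 + b)^2 := by
  nlinarith [mul_nonneg hA1 hA2, mul_nonneg hA1 hA3, mul_nonneg hA2 hA3,
    mul_nonneg hA1 (sub_nonneg.mpr hB1), mul_nonneg hA2 (sub_nonneg.mpr hB2),
    mul_nonneg hA3 (sub_nonneg.mpr hB3), hBsq]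

lemma scalar_ineq (u v t w : ℝ) (hu : 0 < u) (hv : 0 < v) (ht : 0 < t)
    (hw : v < w) (huv : u < v) (ht17 : 1.7 ≤ t) (huv2 : u^2 + v^2 = 1) :
    2*u*v - t*u^2 + 2 - 2*w^2 < u*(2*t*w) := by
  nlinarith [mul_pos (mul_pos ht hu) (sub_pos.mpr hw),
    mul_nonneg (mul_nonneg (by nlinarith : (0:ℝ) ≤ 2*t - 2) hu.le)
      (sub_nonneg.mpr huv.le),
    mul_nonneg (by nlinarith : (0:ℝ) ≤ 3*t - 4) (sq_nonneg u),
    pow_le_pow_left₀ hv.le hw.le 2]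

set_option maxHeartbeats 1600000 in
theorem stmt_9 (d1 d2 d3 : ℝ) (hd1 : 0 < d1) (hd2 : 0 < d2) (hd3 : 0 < d3)
    (I1 I2 I3 : ℝ) (hI1 : I1 = d2 + d3) (hI2 : I2 = d1 + d3) (hI3 : I3 = d1 + d2)
    (α1 α2 α3 : ℝ) (β Δt : ℝ) (hβ0 : 0 < β) (hβ : β < 1/2) (hΔt : 0 < Δt)
    (hCFL : Δt * (|α1| / I1 + |α2| / I2 + |α3| / I3) ≤ 2 * Real.sqrt ((β - β^2)/3) - β)
    (e1 e2 e3 e0 : ℝ) (he : e1^2 + e2^2 + e3^2 < β)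
    (he0 : e0 = Real.sqrt (1 - e1^2 - e2^2 - e3^2))
    (e1' e2' e3' : ℝ)
    (h1 : e1' = (Δt * α1 - 2*(d2 - d3)*e2*e3) / (2*(d2 + d3)*e0))
    (h2 : e2' = (Δt * α2 - 2*(d3 - d1)*e1*e3) / (2*(d1 + d3)*e0))
    (h3 : e3' = (Δt * α3 - 2*(d1 - d2)*e1*e2) / (2*(d1 + d2)*e0)) :
    e1'^2 + e2'^2 + e3'^2 < β := by
  obtain ⟨S, hSdef⟩ : ∃ x : ℝ, x = e1^2 + e2^2 + e3^2 := ⟨_, rfl⟩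
  have hS0 : 0 ≤ S := by rw [hSdef]; positivity
  have heS : S < β := by rw [hSdef]; exact he
  have hS1 : S < 1/2 := lt_trans heS hβ
  have he0' : e0 = Real.sqrt (1 - S) := by rw [he0]; congr 1; rw [hSdef]; ring
  have he0pos : 0 < e0 := by rw [he0']; exact Real.sqrt_pos.mpr (by linarith)
  have he0sq : e0^2 = 1 - S := by rw [he0']; exact Real.sq_sqrt (by linarith)
  -- square roots
  obtain ⟨u, hu⟩ : ∃ x : ℝ, x = Real.sqrt β := ⟨_, rfl⟩
  obtain ⟨v, hv⟩ : ∃ x : ℝ, x = Real.sqrt (1 - β) := ⟨_, rfl⟩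
  obtain ⟨t, ht⟩ : ∃ x : ℝ, x = Real.sqrt 3 := ⟨_, rfl⟩
  have hupos : 0 < u := by rw [hu]; exact Real.sqrt_pos.mpr hβ0
  have hvpos : 0 < v := by rw [hv]; exact Real.sqrt_pos.mpr (by linarith)
  have htpos : 0 < t := by rw [ht]; exact Real.sqrt_pos.mpr (by norm_num)
  have hu2 : u^2 = β := by rw [hu]; exact Real.sq_sqrt hβ0.le
  have hv2 : v^2 = 1 - β := by rw [hv]; exact Real.sq_sqrt (by linarith)
  have ht2 : t^2 = 3 := by rw [ht]; exact Real.sq_sqrt (by norm_num)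
  have ht17 : 1.7 ≤ t := by
    have h : Real.sqrt ((1.7:ℝ)^2) ≤ t := by
      rw [ht]; exact Real.sqrt_le_sqrt (by norm_num)
    rwa [Real.sqrt_sq (by norm_num)] at h
  have ht2le : t ≤ 2 := by
    have h : t ≤ Real.sqrt ((2:ℝ)^2) := by
      rw [ht]; exact Real.sqrt_le_sqrt (by norm_num)
    rwa [Real.sqrt_sq (by norm_num)] at h
  have huv : u < v := by
    rw [hu, hv]; exact Real.sqrt_lt_sqrt hβ0.le (by linarith)
  have hwv : v < e0 := by
    rw [hv, he0']; exact Real.sqrt_lt_sqrt (by linarith) (by linarith)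
  have hsq3 : Real.sqrt ((β - β^2)/3) = u*v/t := by
    rw [show (β - β^2)/3 = (u*v/t)^2 by rw [div_pow, mul_pow, hu2, hv2, ht2]; ring]
    exact Real.sqrt_sq (by positivity)
  -- abbreviations
  obtain ⟨A1, hA1⟩ : ∃ x : ℝ, x = Δt * |α1| / (2*(d2+d3)*e0) := ⟨_, rfl⟩
  obtain ⟨A2, hA2⟩ : ∃ x : ℝ, x = Δt * |α2| / (2*(d1+d3)*e0) := ⟨_, rfl⟩
  obtain ⟨A3, hA3⟩ : ∃ x : ℝ, x = Δt * |α3| / (2*(d1+d2)*e0) := ⟨_, rfl⟩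
  obtain ⟨b, hb⟩ : ∃ x : ℝ, x = S / (t*e0) := ⟨_, rfl⟩
  have hA1n : 0 ≤ A1 := by rw [hA1]; positivity
  have hA2n : 0 ≤ A2 := by rw [hA2]; positivity
  have hA3n : 0 ≤ A3 := by rw [hA3]; positivity
  have hbn : 0 ≤ b := by rw [hb]; positivity
  -- componentwise bounds
  have hE1 : e1'^2 ≤ (A1 + |e2*e3|/e0)^2 := by
    rw [hA1]
    apply aux_bound (d2+d3) e0 Δt α1 (d2-d3) (e2*e3) e1' (by linarith) he0pos hΔt
    · rw [abs_le]; constructor <;> linarith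
    · rw [h1]; ring_nf
  have hE2 : e2'^2 ≤ (A2 + |e1*e3|/e0)^2 := by
    rw [hA2]
    apply aux_bound (d1+d3) e0 Δt α2 (d3-d1) (e1*e3) e2' (by linarith) he0pos hΔt
    · rw [abs_le]; constructor <;> linarith
    · rw [h2]; ring_nf
  have hE3 : e3'^2 ≤ (A3 + |e1*e2|/e0)^2 := by
    rw [hA3]
    apply aux_bound (d1+d2) e0 Δt α3 (d1-d2) (e1*e2) e3' (by linarith) he0pos hΔt
    · rw [abs_le]; constructor <;> linarith
    · rw [h3]; ring_nf
  -- B bounds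
  have habs23 : |e2*e3| ≤ S/2 := by
    rw [hSdef]; linarith [mul_abs_le e2 e3, sq_nonneg e1]
  have habs13 : |e1*e3| ≤ S/2 := by
    rw [hSdef]; linarith [mul_abs_le e1 e3, sq_nonneg e2]
  have habs12 : |e1*e2| ≤ S/2 := by
    rw [hSdef]; linarith [mul_abs_le e1 e2, sq_nonneg e3]
  have hSt : S/2 ≤ S/t := by
    rw [div_le_div_iff₀ two_pos htpos]
    exact mul_le_mul_of_nonneg_left ht2le hS0
  have hdd : S/(t*e0) = (S/t)/e0 := (div_div S t e0).symm
  have hB1 : |e2*e3|/e0 ≤ b := by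
    rw [hb, hdd]; gcongr; linarith
  have hB2 : |e1*e3|/e0 ≤ b := by
    rw [hb, hdd]; gcongr; linarith
  have hB3 : |e1*e2|/e0 ≤ b := by
    rw [hb, hdd]; gcongr; linarith
  have hBsq : (|e2*e3|/e0)^2 + (|e1*e3|/e0)^2 + (|e1*e2|/e0)^2 ≤ b^2 := by
    have key : (e2*e3)^2 + (e1*e3)^2 + (e1*e2)^2 ≤ S^2/3 := by
      rw [hSdef]; exact pairs_bound e1 e2 e3
    have h1' : (|e2*e3|/e0)^2 = (e2*e3)^2/e0^2 := by rw [div_pow, sq_abs]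
    have h2' : (|e1*e3|/e0)^2 = (e1*e3)^2/e0^2 := by rw [div_pow, sq_abs]
    have h3' : (|e1*e2|/e0)^2 = (e1*e2)^2/e0^2 := by rw [div_pow, sq_abs]
    have hb2 : b^2 = (S^2/3)/e0^2 := by
      rw [hb, div_pow, mul_pow, ht2]; ring
    rw [h1', h2', h3', hb2, ← add_div, ← add_div]
    gcongr
  -- combine to (a+b)^2
  have hsum : e1'^2 + e2'^2 + e3'^2 ≤ (A1 + A2 + A3 + b)^2 := by
    have step : (A1 + |e2*e3|/e0)^2 + (A2 + |e1*e3|/e0)^2 + (A3 + |e1*e2|/e0)^2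
        ≤ (A1 + A2 + A3 + b)^2 :=
      sum_sq_bound A1 A2 A3 _ _ _ b hA1n hA2n hA3n hB1 hB2 hB3 hBsq
    linarith [hE1, hE2, hE3]
  -- CFL bound
  have haeq : A1 + A2 + A3 = (Δt * (|α1| / I1 + |α2| / I2 + |α3| / I3))/(2*e0) := by
    rw [hA1, hA2, hA3, hI1, hI2, hI3]
    have h1p : (0:ℝ) < d2 + d3 := by linarith
    have h2p : (0:ℝ) < d1 + d3 := by linarith
    have h3p : (0:ℝ) < d1 + d2 := by linarith
    field_simp
  have ha : A1 + A2 + A3 ≤ (2 * Real.sqrt ((β - β^2)/3) - β)/(2*e0) := by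
    rw [haeq]; gcongr
  -- final scalar inequality
  have hfinal : (2 * Real.sqrt ((β - β^2)/3) - β)/(2*e0) + b < u := by
    have hC : 2 * Real.sqrt ((β - β^2)/3) - β = 2*(u*v/t) - u^2 := by rw [hsq3, hu2]
    have hSe : S = 1 - e0^2 := by linarith [he0sq]
    rw [hC, hb, hSe]
    have lhs_eq : (2*(u*v/t) - u^2)/(2*e0) + (1 - e0^2)/(t*e0)
        = (2*u*v - t*u^2 + 2 - 2*e0^2)/(2*t*e0) := by
      field_simp; ring
    rw [lhs_eq, div_lt_iff₀ (by positivity)]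
    exact scalar_ineq u v t e0 hupos hvpos htpos hwv huv ht17 (by rw [hu2, hv2]; ring)
  have hab : A1 + A2 + A3 + b < u := by linarith
  have hsq : (A1 + A2 + A3 + b)^2 < u^2 :=
    pow_lt_pow_left₀ hab (by positivity) (by norm_num)
  calc e1'^2 + e2'^2 + e3'^2 ≤ (A1 + A2 + A3 + b)^2 := hsum
    _ < u^2 := hsq
    _ = β := hu2
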